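/- Monotone feasibility check: let S be a finite set of queries with interval cardinality constraints, and for an integer m define S_m = {q ∈ S : lb_q ≤ m ≤ ub_q}. Then there exists a subset T ⊆ S satisfying all its members' cardinality constraints if and only if there exists m with m ≤ |S_m|, in which case any m-element subset of S_m works. -/
import Mathlib


/-- Monotone feasibility check: some nonempty subset `T ⊆ S` satisfies all its members'
cardinality intervals iff there exists `m ≥ 1` with `m ≤ |S_m|` where
`S_m = {q ∈ S : lb q ≤ m ≤ ub q}`, in which case any `m`-element subset of `S_m`
satisfies all its members' cardinality constraints. -/
theorem stmt_11 {ι : Type*} (S : Finset ι) (lb ub : ι → ℕ)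
    (hlb : ∀ q ∈ S, 2 ≤ lb q) :
    (∃ T ⊆ S, T.Nonempty ∧ ∀ q ∈ T, lb q ≤ T.card ∧ T.card ≤ ub q)
      ↔ ∃ m : ℕ, 1 ≤ m ∧ m ≤ (S.filter fun q => lb q ≤ m ∧ m ≤ ub q).card ∧
          ∀ T' ⊆ S.filter (fun q => lb q ≤ m ∧ m ≤ ub q), T'.card = m →
            ∀ q ∈ T', lb q ≤ T'.card ∧ T'.card ≤ ub q := by
  constructor
  · rintro ⟨T, hTS, hne, hT⟩
    refine ⟨T.card, hne.card_pos, ?_, ?_⟩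
    · calc T.card ≤ T.card := le_rfl
      _ ≤ (S.filter fun q => lb q ≤ T.card ∧ T.card ≤ ub q).card := by
          apply Finset.card_le_card
          intro q hq
          exact Finset.mem_filter.mpr ⟨hTS hq, hT q hq⟩
    · intro T' hT' hcard q hq
      have := (Finset.mem_filter.mp (hT' hq)).2
      simpa [hcard] using this
  · rintro ⟨m, hm1, hmcard, hall⟩
    obtain ⟨T', hT'sub, hT'card⟩ := Finset.exists_subset_card_eq hmcard
    exact ⟨T', hT'sub.trans (Finset.filter_subset _ _), by
      rw [← Finset.card_pos, hT'card]; exact hm1, hall T' hT'sub hT'card⟩
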